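/- Let $SP_s(x)$ be a generalized star with center $x$ of degree $s \ge 3$ (a tree whose only vertex of degree greater than 2 is $x$). Let $w$ be a vertex of $SP_s(x)$ with $d(x,w)=t$. If every vertex of $SP_s(x)$ is within distance $i$ of $w$, then $|SP_s(x)| \le 2i+1+(s-2)(i-t)$. -/

import Mathlib

open SimpleGraph

/-- A burning sequence of length `k` (0-indexed: `x 0, …, x (k-1)`):
the distance conditions and the covering condition. -/
def IsBurnSeq {V : Type*} (G : SimpleGraph V) (k : ℕ) (x : ℕ → V) : Prop :=
  (∀ i j : ℕ, i < j → j < k → (↑(j - i) : ℕ∞) ≤ G.edist (x i) (x j)) ∧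
  (∀ v : V, ∃ i < k, G.edist (x i) v ≤ (↑(k - 1 - i) : ℕ∞))

/-- The burning number of a graph: the least length of a burning sequence. -/
noncomputable def burningNumber {V : Type*} (G : SimpleGraph V) : ℕ :=
  sInf {k | ∃ x : ℕ → V, IsBurnSeq G k x}

section TreeLemmas

variable {V : Type*} {G : SimpleGraph V} {x : V}

lemma tree_path_unique (hac : G.IsAcyclic) {u v : V} {p q : G.Walk u v}
    (hp : p.IsPath) (hq : q.IsPath) : p = q :=
  congrArg Subtype.val (isAcyclic_iff_path_unique.mp hac ⟨p, hp⟩ ⟨q, hq⟩)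

lemma exists_geodesic (hc : G.Connected) (u v : V) :
    ∃ p : G.Walk u v, p.IsPath ∧ p.length = G.dist u v := by
  haveI : DecidableEq V := Classical.decEq V
  obtain ⟨p, hp⟩ := hc.exists_walk_length_eq_dist u v
  exact ⟨p.bypass, p.bypass_isPath,
    le_antisymm (hp ▸ p.length_bypass_le) (SimpleGraph.dist_le _)⟩

lemma path_length_eq_dist (ht : G.IsTree) {u v : V} (p : G.Walk u v)
    (hp : p.IsPath) : p.length = G.dist u v := by
  obtain ⟨q, hq, hl⟩ := exists_geodesic ht.isConnected u v
  rw [tree_path_unique ht.IsAcyclic hp hq]; exact hl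

lemma adj_dist_le {u v : V} (h : G.Adj u v) : G.dist u v ≤ 1 :=
  SimpleGraph.dist_le (Walk.cons h Walk.nil)

lemma geodesic_support (hc : G.Connected) {u v : V} (p : G.Walk u v) :
    p.length = G.dist u v → ∀ y ∈ p.support,
      G.dist u y + G.dist y v = G.dist u v := by
  induction p with
  | nil => intro _ y hy; simp at hy; subst hy; simp [SimpleGraph.dist_self]
  | @cons u b v h q ih =>
    intro hl y hy
    have hq1 : G.dist b v ≤ q.length := SimpleGraph.dist_le q
    have hq2 : G.dist u v ≤ G.dist u b + G.dist b v := hc.dist_triangle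
    have hub : G.dist u b ≤ 1 := adj_dist_le h
    have hlen : q.length + 1 = G.dist u v := by simpa using hl
    have hbq : q.length = G.dist b v := by omega
    rcases List.mem_cons.mp (by simpa [Walk.support_cons] using hy) with rfl | hy'
    · simp [SimpleGraph.dist_self]
    · have hIH := ih hbq y hy'
      have h1 : G.dist u y ≤ G.dist u b + G.dist b y := hc.dist_triangle
      have h2 : G.dist u v ≤ G.dist u y + G.dist y v := hc.dist_triangle
      omega

lemma first_step (hc : G.Connected) {u v : V} {n : ℕ} (h : G.dist u v = n + 1) :
    ∃ y, G.Adj u y ∧ G.dist y v = n := by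
  obtain ⟨p, hp, hl⟩ := exists_geodesic hc u v
  cases p with
  | nil => simp at hl; rw [SimpleGraph.dist_self] at h; omega
  | @cons u b v hadj q =>
    refine ⟨b, hadj, ?_⟩
    have h1 : G.dist b v ≤ q.length := SimpleGraph.dist_le q
    have h2 : G.dist u v ≤ G.dist u b + G.dist b v := hc.dist_triangle
    have h3 : G.dist u b ≤ 1 := adj_dist_le hadj
    have hlen : q.length + 1 = G.dist u v := by simpa using hl
    omega

lemma last_step (hc : G.Connected) {u v : V} {n : ℕ} (h : G.dist u v = n + 1) :
    ∃ y, G.Adj y v ∧ G.dist u y = n := by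
  obtain ⟨y, h1, h2⟩ := first_step hc (show G.dist v u = n + 1 by rwa [SimpleGraph.dist_comm])
  exact ⟨y, h1.symm, by rwa [SimpleGraph.dist_comm]⟩

lemma branch_exists (hc : G.Connected) {v : V} (hv : v ≠ x) :
    ∃ a, G.Adj x a ∧ G.dist a v + 1 = G.dist x v := by
  have hpos : 0 < G.dist x v := hc.pos_dist_of_ne (Ne.symm hv)
  obtain ⟨n, hn⟩ : ∃ n, G.dist x v = n + 1 := ⟨G.dist x v - 1, by omega⟩
  obtain ⟨a, h1, h2⟩ := first_step hc hn
  exact ⟨a, h1, by omega⟩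

lemma branch_unique (ht : G.IsTree) {v a a' : V} (hv : v ≠ x)
    (ha : G.Adj x a) (ha' : G.Adj x a')
    (hb : G.dist a v + 1 = G.dist x v) (hb' : G.dist a' v + 1 = G.dist x v) :
    a = a' := by
  have hc := ht.isConnected
  obtain ⟨p, hp, hl⟩ := exists_geodesic hc a v
  obtain ⟨p', hp', hl'⟩ := exists_geodesic hc a' v
  have hx : x ∉ p.support := by
    intro hmem
    have := geodesic_support hc p hl x hmem
    omega
  have hx' : x ∉ p'.support := by
    intro hmem
    have := geodesic_support hc p' hl' x hmem
    omega
  have h1 : (Walk.cons ha p).IsPath := hp.cons hx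
  have h2 : (Walk.cons ha' p').IsPath := hp'.cons hx'
  have heq := tree_path_unique ht.IsAcyclic h1 h2
  have hs := congrArg Walk.support heq
  rw [Walk.support_cons, Walk.support_cons, p.support_eq_cons, p'.support_eq_cons] at hs
  simp only [List.cons.injEq] at hs
  exact hs.2.1

lemma parent_unique (ht : G.IsTree) {v y z : V}
    (hyv : G.Adj y v) (hzv : G.Adj z v)
    (hy : G.dist x y + 1 = G.dist x v) (hz : G.dist x z + 1 = G.dist x v) :
    y = z := by
  have hc := ht.isConnected
  obtain ⟨py, hpy, hly⟩ := exists_geodesic hc x y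
  obtain ⟨pz, hpz, hlz⟩ := exists_geodesic hc x z
  have hv1 : v ∉ py.support := by
    intro hmem
    have := geodesic_support hc py hly v hmem
    omega
  have hv2 : v ∉ pz.support := by
    intro hmem
    have := geodesic_support hc pz hlz v hmem
    omega
  have h1 : (py.concat hyv).IsPath := by
    rw [← Walk.isPath_reverse_iff, Walk.reverse_concat]
    exact hpy.reverse.cons (by simpa [Walk.support_reverse] using hv1)
  have h2 : (pz.concat hzv).IsPath := by
    rw [← Walk.isPath_reverse_iff, Walk.reverse_concat]
    exact hpz.reverse.cons (by simpa [Walk.support_reverse] using hv2)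
  have heq := tree_path_unique ht.IsAcyclic h1 h2
  have hs := congrArg (fun q => Walk.support (Walk.reverse q)) heq
  simp only [Walk.reverse_concat, Walk.support_cons] at hs
  rw [py.reverse.support_eq_cons, pz.reverse.support_eq_cons] at hs
  simp only [List.cons.injEq] at hs
  exact hs.2.1

lemma no_flat_edge (ht : G.IsTree) {u v : V} (h : G.Adj u v) :
    G.dist x u ≠ G.dist x v := by
  have hc := ht.isConnected
  intro he
  obtain ⟨p, hp, hl⟩ := exists_geodesic hc x u
  have hv : v ∉ p.support := by
    intro hmem
    have h1 := geodesic_support hc p hl v hmem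
    have h2 : G.dist v u = 0 := by omega
    exact h.ne' ((h.symm.reachable.dist_eq_zero_iff).mp h2)
  have hq : (p.concat h).IsPath := by
    rw [← Walk.isPath_reverse_iff, Walk.reverse_concat]
    exact hp.reverse.cons (by simpa [Walk.support_reverse] using hv)
  have := path_length_eq_dist ht _ hq
  rw [Walk.length_concat] at this
  omega

lemma parent_in_branch (ht : G.IsTree) {v a : V} (ha : G.Adj x a)
    (hb : G.dist a v + 1 = G.dist x v) (h2 : 2 ≤ G.dist x v) :
    ∃ y, G.Adj y v ∧ G.dist x y + 1 = G.dist x v ∧ G.dist a y + 1 = G.dist x y := by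
  have hc := ht.isConnected
  have hxa : G.dist x a = 1 := SimpleGraph.dist_eq_one_iff_adj.mpr ha
  have hav : G.dist a v = (G.dist x v - 2) + 1 := by omega
  obtain ⟨y, hadj, hdy⟩ := last_step hc hav
  have h1 : G.dist x y ≤ G.dist x a + G.dist a y := hc.dist_triangle
  have h3 : G.dist x v ≤ G.dist x y + G.dist y v := hc.dist_triangle
  have h4 : G.dist y v ≤ 1 := adj_dist_le hadj
  have hxy : G.dist x y + 1 = G.dist x v := by omega
  exact ⟨y, hadj, hxy, by omega⟩

lemma same_branch_eq (ht : G.IsTree) [Finite V]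
    (hother : ∀ v : V, v ≠ x → (G.neighborSet v).ncard ≤ 2) :
    ∀ d : ℕ, ∀ {u v a : V}, u ≠ x → v ≠ x → G.Adj x a →
      G.dist a u + 1 = G.dist x u → G.dist a v + 1 = G.dist x v →
      G.dist x u = d → G.dist x v = d → u = v := by
  have hc := ht.isConnected
  intro d
  induction d using Nat.strong_induction_on with
  | _ d ih =>
    intro u v a hu hv ha hbu hbv hdu hdv
    have hpu : 0 < G.dist x u := hc.pos_dist_of_ne (Ne.symm hu)
    rcases Nat.lt_or_ge d 2 with hd | hd
    · -- d = 1
      have hd1 : d = 1 := by omega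
      have h0u : G.dist a u = 0 := by omega
      have h0v : G.dist a v = 0 := by omega
      have e1 := (hc a u).dist_eq_zero_iff.mp h0u
      have e2 := (hc a v).dist_eq_zero_iff.mp h0v
      exact e1.symm.trans e2
    · obtain ⟨y, hyu, hyd, hyb⟩ := parent_in_branch ht ha hbu (by omega)
      obtain ⟨z, hzv, hzd, hzb⟩ := parent_in_branch ht ha hbv (by omega)
      have hyx : y ≠ x := by
        intro hyx; subst hyx
        rw [SimpleGraph.dist_self] at hyd; omega
      have hzx : z ≠ x := by
        intro hzx; subst hzx
        rw [SimpleGraph.dist_self] at hzd; omega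
      have hyz : y = z :=
        ih (d - 1) (by omega) hyx hzx ha hyb hzb (by omega) (by omega)
      subst hyz
      by_contra hne
      have hxy2 : G.dist x y = (d - 2) + 1 := by omega
      obtain ⟨q, hqy, hqd⟩ := last_step hc hxy2
      have hsub : ({u, v, q} : Set V) ⊆ G.neighborSet y := by
        intro z hz
        simp only [Set.mem_insert_iff, Set.mem_singleton_iff] at hz
        rcases hz with rfl | rfl | rfl
        · exact hyu
        · exact hzv
        · exact hqy.symm
      have hqu : u ≠ q := fun h => by subst h; omega
      have hqv : v ≠ q := fun h => by subst h; omega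
      have h3 : ({u, v, q} : Set V).ncard = 3 :=
        Set.ncard_eq_three.mpr ⟨u, v, q, hne, hqu, hqv, rfl⟩
      have hle := Set.ncard_le_ncard hsub (Set.toFinite _)
      have := hother y hyx
      omega

end TreeLemmas

section TreeLemmas2

variable {V : Type*} {G : SimpleGraph V} {x : V}

lemma branch_edge (ht : G.IsTree) {u u' a : V} (hadj : G.Adj u u')
    (hu : u ≠ x) (hu' : u' ≠ x) (ha : G.Adj x a)
    (hb : G.dist a u + 1 = G.dist x u) : G.dist a u' + 1 = G.dist x u' := by
  have hc := ht.isConnected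
  have hne := no_flat_edge (x := x) ht hadj
  have h1 : G.dist x u' ≤ G.dist x u + G.dist u u' := hc.dist_triangle
  have h2 : G.dist x u ≤ G.dist x u' + G.dist u' u := hc.dist_triangle
  have h3 : G.dist u u' ≤ 1 := adj_dist_le hadj
  have h4 : G.dist u' u ≤ 1 := adj_dist_le hadj.symm
  have hpu : 0 < G.dist x u := hc.pos_dist_of_ne (Ne.symm hu)
  have hpu' : 0 < G.dist x u' := hc.pos_dist_of_ne (Ne.symm hu')
  have hcases : G.dist x u = G.dist x u' + 1 ∨ G.dist x u' = G.dist x u + 1 := by omega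
  rcases hcases with hca | hcb
  · -- u' is the parent of u
    have h2u : 2 ≤ G.dist x u := by omega
    obtain ⟨y, hyu, hyd, hyb⟩ := parent_in_branch ht ha hb h2u
    have : u' = y := parent_unique ht hadj.symm hyu (by omega) hyd
    subst this
    exact hyb
  · -- u is the parent of u'
    obtain ⟨b, hab, hbb⟩ := branch_exists hc hu'
    obtain ⟨y, hyu', hyd, hyb⟩ := parent_in_branch ht hab hbb (by omega)
    have huy : u = y := parent_unique ht hadj hyu' (by omega) hyd
    subst huy
    have hba : a = b := branch_unique ht hu ha hab hb hyb
    subst hba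
    exact hbb

lemma walk_avoid (ht : G.IsTree) {u v : V} (p : G.Walk u v) :
    x ∉ p.support → u ≠ x → ∀ a, G.Adj x a →
      G.dist a u + 1 = G.dist x u → G.dist a v + 1 = G.dist x v := by
  induction p with
  | nil => intro _ _ a _ h; exact h
  | @cons u b v hadj q ih =>
    intro hx hu a ha hb
    simp only [Walk.support_cons, List.mem_cons, not_or] at hx
    have hb' : b ≠ x := fun h => hx.2 (h ▸ q.start_mem_support)
    exact ih hx.2 hb' a ha (branch_edge ht hadj hu hb' ha hb)

lemma diff_branch_dist (ht : G.IsTree) {u v a a' : V}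
    (hu : u ≠ x) (hv : v ≠ x) (ha : G.Adj x a) (ha' : G.Adj x a')
    (hbu : G.dist a u + 1 = G.dist x u) (hbv : G.dist a' v + 1 = G.dist x v)
    (hne : a ≠ a') : G.dist u v = G.dist u x + G.dist x v := by
  have hc := ht.isConnected
  obtain ⟨p, hp, hl⟩ := exists_geodesic hc u v
  by_cases hx : x ∈ p.support
  · exact (geodesic_support hc p hl x hx).symm
  · exact absurd (branch_unique ht hv ha ha' (walk_avoid ht p hx hu a ha hbu) hbv) hne

end TreeLemmas2

/-- If a generalized star `SP_s(x)` has every vertex within distance `i` of `w`,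
and `d(x, w) = t`, then it has at most `2i + 1 + (s-2)(i-t)` vertices. -/
theorem stmt_0 {V : Type*} (G : SimpleGraph V) (x w : V) (s t i : ℕ)
    (hs : 3 ≤ s) (htree : G.IsTree)
    (hdeg : (G.neighborSet x).ncard = s)
    (hother : ∀ v : V, v ≠ x → (G.neighborSet v).ncard ≤ 2)
    (ht : G.dist x w = t)
    (hheight : ∀ v : V, G.dist w v ≤ i) :
    Nat.card V ≤ 2 * i + 1 + (s - 2) * (i - t) := by
  classical
  by_cases hfin : Finite V
  swap
  · haveI : Infinite V := not_finite_iff_infinite.mp hfin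
    simp [Nat.card_eq_zero_of_infinite]
  haveI := hfin
  haveI := Fintype.ofFinite V
  have hc := htree.isConnected
  have hti : t ≤ i := by rw [← ht, SimpleGraph.dist_comm]; exact hheight x
  -- branch function
  have hbr0 : ∀ v : V, ∃ a, v ≠ x → G.Adj x a ∧ G.dist a v + 1 = G.dist x v := by
    intro v
    by_cases hv : v = x
    · exact ⟨x, fun h => absurd hv h⟩
    · obtain ⟨a, h1, h2⟩ := branch_exists (x := x) hc hv
      exact ⟨a, fun _ => ⟨h1, h2⟩⟩
  choose br hbr using hbr0
  -- upper bound on depth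
  have hub : ∀ v : V, G.dist x v ≤ i + t := by
    intro v
    have h1 : G.dist x v ≤ G.dist x w + G.dist w v := hc.dist_triangle
    have h2 := hheight v
    omega
  -- deep vertices are in the branch of w
  have hdeep : ∀ v : V, v ≠ x → i - t < G.dist x v → br v = br w := by
    intro v hv hd
    have hwx : w ≠ x := by
      intro hwx
      subst hwx
      have := hheight v
      rw [SimpleGraph.dist_self] at ht
      omega
    by_contra hne
    obtain ⟨hav, hbv⟩ := hbr v hv
    obtain ⟨haw, hbw⟩ := hbr w hwx
    have := diff_branch_dist (x := x) htree hv hwx hav haw hbv hbw hne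
    have hcomm : G.dist v x = G.dist x v := SimpleGraph.dist_comm
    have hvw : G.dist v w ≤ i := by rw [SimpleGraph.dist_comm]; exact hheight v
    omega
  set f : V → V × ℕ := fun v => (if v = x then x else br v, G.dist x v) with hf
  set T : Finset (V × ℕ) :=
    insert (x, 0) ((G.neighborFinset x ×ˢ Finset.Ioc 0 (i - t)) ∪
      ({br w} ×ˢ Finset.Ioc (i - t) (i + t))) with hT
  have hmem : ∀ v : V, f v ∈ T := by
    intro v
    by_cases hv : v = x
    · subst hv
      simp [hf, hT, SimpleGraph.dist_self]
    · have hpos : 0 < G.dist x v := hc.pos_dist_of_ne (Ne.symm hv)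
      have hvv := hbr v hv
      rcases Nat.lt_or_ge (i - t) (G.dist x v) with hd | hd
      · have hbw := hdeep v hv hd
        apply Finset.mem_insert_of_mem
        apply Finset.mem_union_right
        simp [hf, hv, hbw, Finset.mem_Ioc, hd, hub v]
      · apply Finset.mem_insert_of_mem
        apply Finset.mem_union_left
        simp [hf, hv, Finset.mem_Ioc, hpos, hd, G.mem_neighborFinset, hvv.1]
  have hinj : Set.InjOn f ↑(Finset.univ : Finset V) := by
    intro u _ v _ heq
    simp only [hf, Prod.mk.injEq] at heq
    by_cases hu : u = x <;> by_cases hv : v = x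
    · exact hu.trans hv.symm
    · exfalso
      rw [if_pos hu, if_neg hv] at heq
      exact (hbr v hv).1.ne (heq.1)
    · exfalso
      rw [if_neg hu, if_pos hv] at heq
      exact (hbr u hu).1.ne (heq.1.symm)
    · rw [if_neg hu, if_neg hv] at heq
      have h1 := hbr u hu
      have h2 := hbr v hv
      exact same_branch_eq (x := x) htree hother (G.dist x u) hu hv h1.1 h1.2
        (heq.1 ▸ h2.2) rfl heq.2.symm
  have hcard : Fintype.card V ≤ T.card := by
    rw [← Finset.card_univ]
    exact Finset.card_le_card_of_injOn f (fun v _ => hmem v) hinj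
  have hTcard : T.card ≤ 1 + (s * (i - t) + ((i + t) - (i - t))) := by
    calc T.card ≤ ((G.neighborFinset x ×ˢ Finset.Ioc 0 (i - t)) ∪
          ({br w} ×ˢ Finset.Ioc (i - t) (i + t))).card + 1 := Finset.card_insert_le _ _
    _ ≤ ((G.neighborFinset x ×ˢ Finset.Ioc 0 (i - t)).card +
          ({br w} ×ˢ Finset.Ioc (i - t) (i + t)).card) + 1 :=
        Nat.add_le_add_right (Finset.card_union_le _ _) 1
    _ = (s * (i - t) + ((i + t) - (i - t))) + 1 := by
        have hns : (G.neighborFinset x).card = s := by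
          rw [SimpleGraph.neighborFinset_def, ← Set.ncard_eq_toFinset_card']
          exact hdeg
        rw [Finset.card_product, Finset.card_product, Nat.card_Ioc, Nat.card_Ioc,
          Finset.card_singleton, Nat.sub_zero, one_mul, hns]
    _ = 1 + (s * (i - t) + ((i + t) - (i - t))) := by omega
  have harith : 1 + (s * (i - t) + ((i + t) - (i - t))) ≤ 2 * i + 1 + (s - 2) * (i - t) := by
    obtain ⟨k, rfl⟩ : ∃ k, s = k + 3 := ⟨s - 3, by omega⟩
    obtain ⟨a, rfl⟩ : ∃ a, i = t + a := ⟨i - t, by omega⟩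
    have e1 : t + a - t = a := by omega
    rw [e1]
    have e2 : t + a + t - a = 2 * t := by omega
    have e3 : k + 3 - 2 = k + 1 := by omega
    rw [e2, e3]
    have g1 : (k + 3) * a = k * a + 3 * a := by ring
    have g2 : (k + 1) * a = k * a + a := by ring
    linarith
  rw [Nat.card_eq_fintype_card]
  omega
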